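/- Existence of the exact modified Hamiltonian for the implicit midpoint rule for the harmonic oscillator (instance of Proposition 1(b)): let h ≠ 0 with cos(h/2) ≠ 0, and define Ĥ_MP(p,q) = (tan(h/2)/h)·(p² + q²). Then for every y₀ = (p₀,q₀) ∈ ℝ², setting y₁ = (p₀·cos h − q₀·sin h, p₀·sin h + q₀·cos h) (the exact time-h harmonic-oscillator flow), one has J⁻¹∇Ĥ_MP((y₀ + y₁)/2) = (y₁ − y₀)/h. -/

import Mathlib

noncomputable section

/-- The modified Hamiltonian of the implicit midpoint rule with step `h` for the
harmonic oscillator. -/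
def HMP (h p q : ℝ) : ℝ := (Real.tan (h / 2) / h) * (p ^ 2 + q ^ 2)

lemma deriv_HMP (h P : ℝ) :
    deriv (fun q => HMP h P q) = fun q => (Real.tan (h / 2) / h) * (2 * q) := by
  funext q
  unfold HMP
  rw [deriv_const_mul _ (by fun_prop)]
  simp [deriv_pow]

/-- existence of the exact modified Hamiltonian for the implicit midpoint
rule for the harmonic oscillator: along the exact time-`h` flow
`(p₁, q₁) = (p₀ cos h − q₀ sin h, p₀ sin h + q₀ cos h)`, the symplectic gradient
`J⁻¹∇Ĥ_MP = (−∂Ĥ_MP/∂q, ∂Ĥ_MP/∂p)` at the midpoint `(y₀ + y₁)/2` equals `(y₁ − y₀)/h`. -/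
theorem stmt9 (h : ℝ) (hh : h ≠ 0) (hcos : Real.cos (h / 2) ≠ 0) :
    ∀ p₀ q₀ p₁ q₁ : ℝ,
      p₁ = p₀ * Real.cos h - q₀ * Real.sin h →
      q₁ = p₀ * Real.sin h + q₀ * Real.cos h →
      -(deriv (fun q => HMP h ((p₀ + p₁) / 2) q) ((q₀ + q₁) / 2)) = (p₁ - p₀) / h ∧
        deriv (fun p => HMP h p ((q₀ + q₁) / 2)) ((p₀ + p₁) / 2) = (q₁ - q₀) / h := by
  intro p₀ q₀ p₁ q₁ hp hq
  have hsin : Real.sin h = 2 * Real.sin (h / 2) * Real.cos (h / 2) := by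
    rw [← Real.sin_two_mul]; ring_nf
  have hcos2 : Real.cos h = 2 * Real.cos (h / 2) ^ 2 - 1 := by
    rw [← Real.cos_two_mul]; ring_nf
  have hpyth : Real.sin (h / 2) ^ 2 + Real.cos (h / 2) ^ 2 = 1 :=
    Real.sin_sq_add_cos_sq _
  have hderiv1 : deriv (fun q => HMP h ((p₀ + p₁) / 2) q) ((q₀ + q₁) / 2)
      = (Real.tan (h / 2) / h) * (2 * ((q₀ + q₁) / 2)) := by
    rw [deriv_HMP]
  have hderiv2 : deriv (fun p => HMP h p ((q₀ + q₁) / 2)) ((p₀ + p₁) / 2)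
      = (Real.tan (h / 2) / h) * (2 * ((p₀ + p₁) / 2)) := by
    have : (fun p => HMP h p ((q₀ + q₁) / 2)) = fun p =>
        (Real.tan (h / 2) / h) * (((q₀ + q₁) / 2) ^ 2 + p ^ 2) := by
      funext p; unfold HMP; ring
    rw [this]
    rw [deriv_const_mul _ (by fun_prop)]
    simp [deriv_pow]
  rw [hderiv1, hderiv2, Real.tan_eq_sin_div_cos]
  subst hp hq
  rw [hsin, hcos2]
  constructor
  · field_simp
    linear_combination (-(2*Real.cos (h/2)*p₀)) * hpyth
  · field_simp
    linear_combination (-(2*Real.cos (h/2)*q₀)) * hpyth
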